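/- Suppose φ* ∈ Ψ attains inf_{φ ∈ Ψ} D(φ) and x̃ ∈ F_κ attains sup_{x ∈ F_κ} S(x). Then L(φ*, x̃) = D(φ*), so x̃ maximizes L(φ*, ·) over F_κ; and for every x* ∈ F_κ that maximizes L(φ*, ·) over F_κ there exists k with A_{ψ*} k = 0 and x̃ = x* + k, where A_{ψ*} = A_o + Σ_j φ*_j A_j. -/

import Mathlib

open Matrix ComplexOrder

/-- The real quadratic functional `x ↦ 2 Re⟨s,x⟩ - Re⟨x, M x⟩ + c`. -/
noncomputable def sionQuadF {n : ℕ} (M : Matrix (Fin n) (Fin n) ℂ) (s : Fin n → ℂ) (c : ℝ)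
    (x : Fin n → ℂ) : ℝ :=
  2 * (star s ⬝ᵥ x).re - (star x ⬝ᵥ M *ᵥ x).re + c
lemma sionHermSymm {n : ℕ} {M : Matrix (Fin n) (Fin n) ℂ} (hM : M.IsHermitian)
    (a b : Fin n → ℂ) : (star a ⬝ᵥ M *ᵥ b).re = (star b ⬝ᵥ M *ᵥ a).re := by
  have h : star a ⬝ᵥ M *ᵥ b = star (star b ⬝ᵥ M *ᵥ a) := by
    rw [star_dotProduct, star_mulVec, ← Matrix.dotProduct_mulVec, hM.eq]
  rw [h, Complex.star_def, Complex.conj_re]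

lemma sionDotSymm {n : ℕ} (a b : Fin n → ℂ) :
    (star a ⬝ᵥ b).re = (star b ⬝ᵥ a).re := by
  have h : star a ⬝ᵥ b = star (star b ⬝ᵥ a) := by rw [star_dotProduct]
  rw [h, Complex.star_def, Complex.conj_re]

lemma sionRealSmul {n : ℕ} (σ : ℝ) (a : Fin n → ℂ) : σ • a = (σ : ℂ) • a := by
  funext i; simp [Complex.real_smul]

lemma sionFormExpand {n : ℕ} (M : Matrix (Fin n) (Fin n) ℂ) (a b : Fin n → ℂ) (σ τ : ℂ) :
    star (σ • a + τ • b) ⬝ᵥ M *ᵥ (σ • a + τ • b) =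
      star σ * σ * (star a ⬝ᵥ M *ᵥ a) + star σ * τ * (star a ⬝ᵥ M *ᵥ b) +
      star τ * σ * (star b ⬝ᵥ M *ᵥ a) + star τ * τ * (star b ⬝ᵥ M *ᵥ b) := by
  simp only [star_add, star_smul, Matrix.mulVec_add, Matrix.mulVec_smul,
    add_dotProduct, dotProduct_add, smul_dotProduct, dotProduct_smul, smul_eq_mul]
  ring

lemma sionFormSub {n : ℕ} {M : Matrix (Fin n) (Fin n) ℂ} (hM : M.IsHermitian)
    (a b : Fin n → ℂ) :
    (star (a - b) ⬝ᵥ M *ᵥ (a - b)).re =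
      (star a ⬝ᵥ M *ᵥ a).re - 2 * (star a ⬝ᵥ M *ᵥ b).re + (star b ⬝ᵥ M *ᵥ b).re := by
  have h : star (a - b) ⬝ᵥ M *ᵥ (a - b) =
      (star a ⬝ᵥ M *ᵥ a) - (star a ⬝ᵥ M *ᵥ b) - (star b ⬝ᵥ M *ᵥ a) + (star b ⬝ᵥ M *ᵥ b) := by
    simp only [star_sub, Matrix.mulVec_sub, sub_dotProduct, dotProduct_sub]
    ring
  rw [h]
  simp only [Complex.add_re, Complex.sub_re]
  rw [sionHermSymm hM b a]
  ring

lemma sionQuadF_combo {n : ℕ} {M : Matrix (Fin n) (Fin n) ℂ} (hM : M.IsHermitian)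
    (s : Fin n → ℂ) (c : ℝ) (a b : Fin n → ℂ) (σ τ : ℝ) (hστ : σ + τ = 1) :
    sionQuadF M s c (σ • a + τ • b) =
      σ * sionQuadF M s c a + τ * sionQuadF M s c b +
        σ * τ * (star (a - b) ⬝ᵥ M *ᵥ (a - b)).re := by
  have hτ : τ = 1 - σ := by linarith
  subst hτ
  unfold sionQuadF
  rw [sionRealSmul σ a, sionRealSmul (1 - σ) b]
  have h1 : star s ⬝ᵥ ((σ:ℂ) • a + ((1-σ:ℝ):ℂ) • b) =
      (σ:ℂ) * (star s ⬝ᵥ a) + ((1-σ:ℝ):ℂ) * (star s ⬝ᵥ b) := by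
    simp [dotProduct_add, dotProduct_smul, smul_eq_mul]
  rw [h1, sionFormExpand, sionFormSub hM]
  simp only [Complex.add_re, Complex.sub_re]
  have hre : ∀ (t : ℝ) (z : ℂ), ((t:ℂ) * z).re = t * z.re := fun t z => by
    simp [Complex.re_ofReal_mul]
  have hstar : ∀ (t : ℝ), star ((t:ℝ):ℂ) = ((t:ℝ):ℂ) := fun t => by
    simp [Complex.star_def]
  rw [hstar, hstar]
  have hre2 : ∀ (t u : ℝ) (z : ℂ), ((t:ℂ) * (u:ℂ) * z).re = t * (u * z.re) := fun t u z => by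
    rw [mul_assoc, hre, hre]
  rw [hre, hre, hre2, hre2, hre2, hre2]
  rw [sionHermSymm hM b a]
  ring

lemma sionQuadF_continuous {n : ℕ} (M : Matrix (Fin n) (Fin n) ℂ) (s : Fin n → ℂ) (c : ℝ) :
    Continuous (sionQuadF M s c) := by
  unfold sionQuadF
  have h1 : Continuous fun x : Fin n → ℂ => star s ⬝ᵥ x := by
    unfold dotProduct
    exact continuous_finset_sum _ fun i _ => (continuous_const.mul (continuous_apply i))
  have h2 : Continuous fun x : Fin n → ℂ => star x ⬝ᵥ M *ᵥ x := by
    unfold dotProduct Matrix.mulVec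
    refine continuous_finset_sum _ fun i _ => Continuous.mul ?_ ?_
    · exact continuous_star.comp (continuous_apply i)
    · exact continuous_finset_sum _ fun j _ => (continuous_const.mul (continuous_apply j))
  exact ((continuous_const.mul (Complex.continuous_re.comp h1)).sub
    (Complex.continuous_re.comp h2)).add continuous_const

lemma sionHermReal {n : ℕ} {M : Matrix (Fin n) (Fin n) ℂ} (hM : M.IsHermitian)
    (v : Fin n → ℂ) : (star v ⬝ᵥ M *ᵥ v).im = 0 := by
  have h : star v ⬝ᵥ M *ᵥ v = star (star v ⬝ᵥ M *ᵥ v) := by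
    conv_lhs => rw [star_dotProduct, star_mulVec, ← Matrix.dotProduct_mulVec, hM.eq]
  have := congrArg Complex.im h
  simp only [Complex.star_def, Complex.conj_im] at this
  linarith

lemma sionPsdRe {n : ℕ} {M : Matrix (Fin n) (Fin n) ℂ} (hM : M.PosSemidef)
    (v : Fin n → ℂ) : 0 ≤ (star v ⬝ᵥ M *ᵥ v).re := by
  have := hM.dotProduct_mulVec_nonneg v
  rw [Complex.le_def] at this
  simpa using this.1

lemma sionPsdOfRe {n : ℕ} {M : Matrix (Fin n) (Fin n) ℂ} (hM : M.IsHermitian)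
    (h : ∀ v, 0 ≤ (star v ⬝ᵥ M *ᵥ v).re) : M.PosSemidef := by
  refine Matrix.PosSemidef.of_dotProduct_mulVec_nonneg hM fun v => ?_
  rw [Complex.le_def]
  exact ⟨by simpa using h v, by simpa using (sionHermReal hM v).symm⟩

lemma sionPsdKernel {n : ℕ} {M : Matrix (Fin n) (Fin n) ℂ} (hM : M.PosSemidef)
    (v : Fin n → ℂ) (h : (star v ⬝ᵥ M *ᵥ v).re = 0) : M *ᵥ v = 0 := by
  refine (hM.dotProduct_mulVec_zero_iff v).1 ?_
  have him := sionHermReal hM.1 v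
  exact Complex.ext (by simpa using h) (by simpa using him)

lemma sionQuadF_ray {n : ℕ} {M : Matrix (Fin n) (Fin n) ℂ} (hM : M.IsHermitian)
    (s : Fin n → ℂ) (c : ℝ) (x w : Fin n → ℂ) (t : ℝ) :
    sionQuadF M s c (x + t • w) =
      sionQuadF M s c x + 2 * t * (star w ⬝ᵥ (s - M *ᵥ x)).re
        - t ^ 2 * (star w ⬝ᵥ M *ᵥ w).re := by
  unfold sionQuadF
  rw [sionRealSmul]
  have hre : ∀ (u : ℝ) (z : ℂ), ((u:ℂ) * z).re = u * z.re := fun u z => by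
    simp [Complex.re_ofReal_mul]
  have h1 : star s ⬝ᵥ (x + (t:ℂ) • w) = star s ⬝ᵥ x + (t:ℂ) * (star s ⬝ᵥ w) := by
    simp [dotProduct_add, dotProduct_smul, smul_eq_mul]
  have h2 : star (x + (t:ℂ) • w) ⬝ᵥ M *ᵥ (x + (t:ℂ) • w) =
      star x ⬝ᵥ M *ᵥ x + (t:ℂ) * (star x ⬝ᵥ M *ᵥ w) + (t:ℂ) * (star w ⬝ᵥ M *ᵥ x)
        + (t:ℂ) * (t:ℂ) * (star w ⬝ᵥ M *ᵥ w) := by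
    simp only [star_add, star_smul, Matrix.mulVec_add, Matrix.mulVec_smul,
      add_dotProduct, dotProduct_add, smul_dotProduct, dotProduct_smul, smul_eq_mul,
      Complex.star_def, Complex.conj_ofReal]
    ring
  have h3 : (star w ⬝ᵥ (s - M *ᵥ x)).re = (star w ⬝ᵥ s).re - (star w ⬝ᵥ M *ᵥ x).re := by
    simp [dotProduct_sub, Complex.sub_re]
  rw [h1, h2, h3]
  simp only [Complex.add_re]
  rw [hre, hre, hre, mul_assoc (t:ℂ), hre, hre]
  rw [sionHermSymm hM x w, sionDotSymm s w]
  ring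

lemma sionPsdOfBounded {n : ℕ} {M : Matrix (Fin n) (Fin n) ℂ} (hM : M.IsHermitian)
    (s : Fin n → ℂ) (c : ℝ) (hne : ({x | 0 ≤ sionQuadF M s c x} : Set (Fin n → ℂ)).Nonempty)
    (hbd : Bornology.IsBounded ({x | 0 ≤ sionQuadF M s c x} : Set (Fin n → ℂ))) :
    ∀ v, 0 ≤ (star v ⬝ᵥ M *ᵥ v).re := by
  by_contra hcon
  push_neg at hcon
  obtain ⟨v, hv⟩ := hcon
  obtain ⟨x0, hx0⟩ := hne
  have hvne : v ≠ 0 := by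
    rintro rfl
    simp at hv
  set z : ℂ := star v ⬝ᵥ (s - M *ᵥ x0) with hz
  set μ : ℂ := if z = 0 then 1 else z / ‖z‖ with hμ
  have hμabs : ‖μ‖ = 1 := by
    rw [hμ]
    split_ifs with h
    · simp
    · rw [norm_div]
      simp [div_self (norm_ne_zero_iff.2 h)]
  have hμne : μ ≠ 0 := by
    intro h
    rw [h] at hμabs
    simp at hμabs
  set w : Fin n → ℂ := μ • v with hw
  have hwne : w ≠ 0 := smul_ne_zero hμne hvne
  have hlin : 0 ≤ (star w ⬝ᵥ (s - M *ᵥ x0)).re := by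
    have h1 : star w ⬝ᵥ (s - M *ᵥ x0) = star μ * z := by
      rw [hw, star_smul, smul_dotProduct, smul_eq_mul, hz]
    rw [h1, hμ]
    split_ifs with h
    · simp [h]
    · rw [Complex.star_def, map_div₀, div_mul_eq_mul_div]
      have : (starRingEnd ℂ) z * z = (Complex.normSq z : ℂ) := by
        rw [mul_comm, Complex.mul_conj]
      rw [this]
      have : ((Complex.normSq z : ℂ) / (starRingEnd ℂ) ((‖z‖ : ℝ) : ℂ)).re
          = Complex.normSq z / ‖z‖ := by
        rw [Complex.conj_ofReal]
        rw [Complex.div_ofReal_re, Complex.ofReal_re]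
      rw [this]
      exact div_nonneg (Complex.normSq_nonneg z) (norm_nonneg z)
  have hquad : star w ⬝ᵥ M *ᵥ w = star v ⬝ᵥ M *ᵥ v := by
    rw [hw, star_smul, smul_dotProduct, Matrix.mulVec_smul, dotProduct_smul,
      smul_eq_mul, smul_eq_mul, ← mul_assoc]
    have : star μ * μ = 1 := by
      rw [Complex.star_def, mul_comm, Complex.mul_conj]
      rw [Complex.normSq_eq_norm_sq, hμabs]
      simp
    rw [this, one_mul]
  have hmem : ∀ t : ℝ, 0 ≤ t → x0 + t • w ∈ {x | 0 ≤ sionQuadF M s c x} := by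
    intro t ht
    have := sionQuadF_ray hM s c x0 w t
    rw [Set.mem_setOf_eq, this, hquad]
    have h2 : 0 ≤ 2 * t * (star w ⬝ᵥ (s - M *ᵥ x0)).re := by positivity
    have hx0' : 0 ≤ sionQuadF M s c x0 := hx0
    have h3 : 0 ≤ t ^ 2 * (-(star v ⬝ᵥ M *ᵥ v).re) := mul_nonneg (sq_nonneg t) (by linarith)
    linarith
  obtain ⟨C, hC⟩ := hbd.exists_norm_le
  have hwpos : 0 < ‖w‖ := norm_pos_iff.2 hwne
  set t : ℝ := (C + ‖x0‖ + 1) / ‖w‖ with htdef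
  have hx0C : ‖x0‖ ≤ C := hC x0 hx0
  have ht : 0 ≤ t := div_nonneg (by linarith [norm_nonneg x0]) hwpos.le
  have hmem' := hmem t ht
  have hle := hC _ hmem'
  have htw : ‖t • w‖ = C + ‖x0‖ + 1 := by
    rw [norm_smul, Real.norm_eq_abs, abs_of_nonneg ht, htdef, div_mul_cancel₀]
    exact ne_of_gt hwpos
  have : ‖t • w‖ ≤ ‖x0 + t • w‖ + ‖x0‖ := by
    have := norm_add_le (x0 + t • w) (-x0)
    simpa [add_comm, add_assoc] using this
  rw [htw] at this
  linarith

lemma sionSumDot {n : ℕ} {J : Type} [Fintype J] (u : J → Fin n → ℂ) (x : Fin n → ℂ) :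
    (∑ j, u j) ⬝ᵥ x = ∑ j, u j ⬝ᵥ x := by
  simp only [dotProduct, Finset.sum_apply, Finset.sum_mul]
  rw [Finset.sum_comm]

lemma sionDotSum {n : ℕ} {J : Type} [Fintype J] (x : Fin n → ℂ) (u : J → Fin n → ℂ) :
    x ⬝ᵥ (∑ j, u j) = ∑ j, x ⬝ᵥ u j := by
  simp only [dotProduct, Finset.sum_apply, Finset.mul_sum]
  rw [Finset.sum_comm]

lemma sionSumMulVec {n : ℕ} {J : Type} [Fintype J] (N : J → Matrix (Fin n) (Fin n) ℂ)
    (x : Fin n → ℂ) : (∑ j, N j) *ᵥ x = ∑ j, N j *ᵥ x := by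
  funext i
  simp only [Matrix.mulVec, dotProduct, Finset.sum_apply, Matrix.sum_apply, Finset.sum_mul]
  rw [Finset.sum_comm]

lemma sionVecRe {n : ℕ} {J : Type} [Fintype J] (w : J → ℝ) (sv : J → Fin n → ℂ)
    (x : Fin n → ℂ) :
    (star (∑ j, w j • sv j) ⬝ᵥ x).re = ∑ j, w j * (star (sv j) ⬝ᵥ x).re := by
  rw [star_sum]
  have h : ∀ j : J, star (w j • sv j) = w j • star (sv j) := fun j => by
    rw [star_smul, star_trivial]
  simp_rw [h]
  rw [sionSumDot, Complex.re_sum]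
  refine Finset.sum_congr rfl fun j _ => ?_
  rw [smul_dotProduct, Complex.smul_re, smul_eq_mul]

lemma sionMatRe {n : ℕ} {J : Type} [Fintype J] (w : J → ℝ)
    (A : J → Matrix (Fin n) (Fin n) ℂ) (x : Fin n → ℂ) :
    (star x ⬝ᵥ (∑ j, w j • A j) *ᵥ x).re = ∑ j, w j * (star x ⬝ᵥ (A j) *ᵥ x).re := by
  rw [sionSumMulVec, sionDotSum, Complex.re_sum]
  refine Finset.sum_congr rfl fun j _ => ?_
  rw [smul_mulVec, dotProduct_smul, Complex.smul_re, smul_eq_mul]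

lemma sionWeightedForm {n : ℕ} {J : Type} [Fintype J] (A : J → Matrix (Fin n) (Fin n) ℂ)
    (sv : J → Fin n → ℂ) (cv : J → ℝ) (w : J → ℝ) (x : Fin n → ℂ) :
    ∑ j, w j * sionQuadF (A j) (sv j) (cv j) x =
      sionQuadF (∑ j, w j • A j) (∑ j, w j • sv j) (∑ j, w j * cv j) x := by
  unfold sionQuadF
  rw [sionVecRe, sionMatRe, Finset.mul_sum, ← Finset.sum_sub_distrib, ← Finset.sum_add_distrib]
  exact Finset.sum_congr rfl fun j _ => by ring

lemma sionQuadF_add {n : ℕ} (M1 M2 : Matrix (Fin n) (Fin n) ℂ) (s1 s2 : Fin n → ℂ)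
    (c1 c2 : ℝ) (x : Fin n → ℂ) :
    sionQuadF M1 s1 c1 x + sionQuadF M2 s2 c2 x =
      sionQuadF (M1 + M2) (s1 + s2) (c1 + c2) x := by
  unfold sionQuadF
  rw [star_add, add_dotProduct, Matrix.add_mulVec, dotProduct_add]
  simp only [Complex.add_re]
  ring

lemma sionHermSumSmul {n : ℕ} {J : Type} [Fintype J] (w : J → ℝ)
    {B : J → Matrix (Fin n) (Fin n) ℂ} (hB : ∀ j, (B j).IsHermitian) :
    (∑ j, w j • B j).IsHermitian := by
  unfold Matrix.IsHermitian
  rw [Matrix.conjTranspose_sum]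
  refine Finset.sum_congr rfl fun j _ => ?_
  rw [Matrix.conjTranspose_smul, star_trivial, (hB j).eq]

lemma sionPsdSum {n : ℕ} {J : Type} [Fintype J] (μ : J → ℝ)
    {B : J → Matrix (Fin n) (Fin n) ℂ} (hμ : ∀ j, 0 ≤ μ j) (hB : ∀ j, (B j).PosSemidef) :
    (∑ j, μ j • B j).PosSemidef := by
  refine Matrix.PosSemidef.of_dotProduct_mulVec_nonneg (sionHermSumSmul μ fun j => (hB j).1) fun v => ?_
  rw [sionSumMulVec, sionDotSum]
  refine Finset.sum_nonneg fun j _ => ?_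
  rw [smul_mulVec, dotProduct_smul]
  have h1 : μ j • (star v ⬝ᵥ (B j) *ᵥ v) = ((μ j : ℝ) : ℂ) * (star v ⬝ᵥ (B j) *ᵥ v) := by
    rw [Complex.real_smul]
  rw [h1]
  refine mul_nonneg ?_ ((hB j).dotProduct_mulVec_nonneg v)
  rw [Complex.le_def]
  constructor
  · simpa using hμ j
  · simp
/-- Lemma 2. If `φ*` minimizes the dual `D` over `Ψ` and `x̃ ∈ Fκ`
maximizes the Sion function `S` over `Fκ`, then `L(φ*, x̃) = D(φ*)` (so `x̃` maximizes
`L(φ*, ·)` over `Fκ`), and `x̃` differs from any maximizer `x*` of `L(φ*, ·)` over `Fκ`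
by an element of the kernel of `A_{ψ*} = A_o + Σ_j φ*_j A_j`. -/
theorem sion_maximizer_vs_dual_maximizer
    (n : ℕ) (hn : 1 ≤ n) (J : Type) [Fintype J]
    (Ao : Matrix (Fin n) (Fin n) ℂ) (A : J → Matrix (Fin n) (Fin n) ℂ)
    (so : Fin n → ℂ) (s : J → Fin n → ℂ) (co : ℝ) (c : J → ℝ)
    (hAo : Ao.IsHermitian) (hA : ∀ j, (A j).IsHermitian)
    (fo : (Fin n → ℂ) → ℝ)
    (hfo : ∀ x, fo x = 2 * (star so ⬝ᵥ x).re - (star x ⬝ᵥ Ao.mulVec x).re + co)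
    (f : J → (Fin n → ℂ) → ℝ)
    (hf : ∀ j x, f j x = 2 * (star (s j) ⬝ᵥ x).re - (star x ⬝ᵥ (A j).mulVec x).re + c j)
    (L : (J → ℝ) → (Fin n → ℂ) → ℝ)
    (hL : ∀ φ x, L φ x = fo x + ∑ j, φ j * f j x)
    (Ψ : Set (J → ℝ))
    (hΨ : Ψ = {φ | (∀ j, 0 ≤ φ j) ∧ (Ao + ∑ j, φ j • A j).PosSemidef})
    (hΨne : Ψ.Nonempty)
    (κ : J → ℝ) (hκ : ∀ j, 0 ≤ κ j)
    (Fκ : Set (Fin n → ℂ))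
    (hFκ : Fκ = {x | 0 ≤ ∑ j, κ j * f j x})
    (hFκne : Fκ.Nonempty) (hFκcpt : IsCompact Fκ)
    (D : (J → ℝ) → ℝ)
    (hD : ∀ φ, D φ = sSup ((fun x => L φ x) '' Fκ))
    (S : (Fin n → ℂ) → EReal)
    (hS : ∀ x, S x = ⨅ φ ∈ Ψ, (L φ x : EReal))
    (φs : J → ℝ) (hφsΨ : φs ∈ Ψ)
    (hφsmin : ∀ φ ∈ Ψ, D φs ≤ D φ)
    (xt : Fin n → ℂ) (hxt : xt ∈ Fκ)
    (hxtmax : ∀ x ∈ Fκ, S x ≤ S xt) :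
    L φs xt = D φs ∧
    (∀ x ∈ Fκ, L φs x ≤ L φs xt) ∧
    (∀ xs ∈ Fκ, (∀ x ∈ Fκ, L φs x ≤ L φs xs) →
      ∃ k : Fin n → ℂ, (Ao + ∑ j, φs j • A j).mulVec k = 0 ∧ xt = xs + k) := by
  classical
  -- ## Setup
  have hφmem := hφsΨ
  rw [hΨ] at hφmem
  obtain ⟨hφs0, hφspsd⟩ := hφmem
  have hMherm : ∀ φ : J → ℝ, (Ao + ∑ j, φ j • A j).IsHermitian := fun φ =>
    hAo.add (sionHermSumSmul φ hA)
  -- weighted sums of the constraints are quadratic functionals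
  have hwq : ∀ (w : J → ℝ) (x : Fin n → ℂ), ∑ j, w j * f j x =
      sionQuadF (∑ j, w j • A j) (∑ j, w j • s j) (∑ j, w j * c j) x := by
    intro w x
    rw [← sionWeightedForm]
    exact Finset.sum_congr rfl fun j _ => by rw [hf]; rfl
  have hLq : ∀ (φ : J → ℝ) (x : Fin n → ℂ), L φ x =
      sionQuadF (Ao + ∑ j, φ j • A j) (so + ∑ j, φ j • s j) (co + ∑ j, φ j * c j) x := by
    intro φ x
    rw [hL, hwq φ x, show fo x = sionQuadF Ao so co x from hfo x, sionQuadF_add]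
  -- Fκ as a quadratic sublevel set
  have hFκq : Fκ = {x | 0 ≤ sionQuadF (∑ j, κ j • A j) (∑ j, κ j • s j) (∑ j, κ j * c j) x} := by
    rw [hFκ]
    exact Set.ext fun x => by rw [Set.mem_setOf_eq, Set.mem_setOf_eq, hwq κ x]
  have hκherm : (∑ j, κ j • A j).IsHermitian := sionHermSumSmul κ hA
  have hκpsd : (∑ j, κ j • A j).PosSemidef := by
    have hne' := hFκne
    have hcpt' := hFκcpt
    rw [hFκq] at hne' hcpt'
    exact sionPsdOfRe hκherm (sionPsdOfBounded hκherm _ _ hne' hcpt'.isBounded)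
  -- Fκ is convex
  have hFκconv : ∀ a ∈ Fκ, ∀ b ∈ Fκ, ∀ σ τ : ℝ, 0 ≤ σ → 0 ≤ τ → σ + τ = 1 →
      σ • a + τ • b ∈ Fκ := by
    intro a ha b hb σ τ hσ hτ hστ
    rw [hFκq] at ha hb ⊢
    rw [Set.mem_setOf_eq] at ha hb ⊢
    rw [sionQuadF_combo hκherm _ _ a b σ τ hστ]
    have hQ := sionPsdRe hκpsd (a - b)
    exact add_nonneg (add_nonneg (mul_nonneg hσ ha) (mul_nonneg hτ hb))
      (mul_nonneg (mul_nonneg hσ hτ) hQ)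
  -- concavity of L φ for φ ∈ Ψ
  have hconc : ∀ φ ∈ Ψ, ∀ (a b : Fin n → ℂ) (σ τ : ℝ), 0 ≤ σ → 0 ≤ τ → σ + τ = 1 →
      σ * L φ a + τ * L φ b ≤ L φ (σ • a + τ • b) := by
    intro φ hφ a b σ τ hσ hτ hστ
    rw [hΨ] at hφ
    obtain ⟨-, hpsd⟩ := hφ
    rw [hLq, hLq, hLq, sionQuadF_combo (hMherm φ) _ _ a b σ τ hστ]
    have hQ := sionPsdRe hpsd (a - b)
    nlinarith [mul_nonneg (mul_nonneg hσ hτ) hQ]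
  -- continuity and boundedness facts
  have hLcont : ∀ φ : J → ℝ, Continuous (L φ) := by
    intro φ
    have h1 : L φ = sionQuadF (Ao + ∑ j, φ j • A j) (so + ∑ j, φ j • s j)
        (co + ∑ j, φ j * c j) := funext fun x => hLq φ x
    rw [h1]
    exact sionQuadF_continuous _ _ _
  have himgne : ∀ φ : J → ℝ, ((fun x => L φ x) '' Fκ).Nonempty := fun φ => hFκne.image _
  have hbdd : ∀ φ : J → ℝ, BddAbove ((fun x => L φ x) '' Fκ) := fun φ =>
    (hFκcpt.image (hLcont φ)).bddAbove
  have hleD : ∀ (φ : J → ℝ), ∀ x ∈ Fκ, L φ x ≤ D φ := by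
    intro φ x hx
    rw [hD]
    exact le_csSup (hbdd φ) ⟨x, hx, rfl⟩
  -- ## Core minimax step
  have hcore : ∀ r : ℝ, r < D φs → ∃ x ∈ Fκ, ∀ φ ∈ Ψ, r ≤ L φ x := by
    intro r hr
    -- ### finite intersection step via Hahn–Banach separation
    have hfin : ∀ G : Finset (J → ℝ), (↑G : Set (J → ℝ)) ⊆ Ψ →
        ∃ x ∈ Fκ, ∀ φ ∈ G, r ≤ L φ x := by
      intro G hG
      by_contra hcon
      push_neg at hcon
      obtain ⟨x0, hx0⟩ := hFκne
      have hGne : G.Nonempty := by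
        obtain ⟨φ, hφG, -⟩ := hcon x0 hx0
        exact ⟨φ, hφG⟩
      haveI : Nonempty {φ // φ ∈ G} := ⟨⟨hGne.choose, hGne.choose_spec⟩⟩
      have hmemΨ : ∀ i : {φ // φ ∈ G},
          (∀ j, 0 ≤ i.1 j) ∧ (Ao + ∑ j, i.1 j • A j).PosSemidef := by
        intro i
        have hi := hG i.2
        rw [hΨ] at hi
        exact hi
      set U : Set ({φ // φ ∈ G} → ℝ) :=
        {u | ∃ x ∈ Fκ, ∀ i : {φ // φ ∈ G}, u i ≤ L i.1 x} with hUdef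
      have hUconv : Convex ℝ U := by
        rintro u ⟨x, hx, hux⟩ v ⟨y, hy, hvy⟩ σ τ hσ hτ hστ
        refine ⟨σ • x + τ • y, hFκconv x hx y hy σ τ hσ hτ hστ, fun i => ?_⟩
        have h1 := hconc i.1 (hG i.2) x y σ τ hσ hτ hστ
        have h2 : σ * u i + τ * v i ≤ σ * L i.1 x + τ * L i.1 y :=
          add_le_add (mul_le_mul_of_nonneg_left (hux i) hσ)
            (mul_le_mul_of_nonneg_left (hvy i) hτ)
        have h3 : (σ • u + τ • v) i = σ * u i + τ * v i := rfl
        rw [h3]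
        linarith
      have hUclosed : IsClosed U := by
        have hseq : IsSeqClosed U := by
          intro u p hu hlim
          choose xs hxsF hxsle using hu
          obtain ⟨x, hxF, ψk, hψmono, hψtend⟩ := hFκcpt.tendsto_subseq hxsF
          refine ⟨x, hxF, fun i => ?_⟩
          have h1 : Filter.Tendsto (fun k => u (ψk k) i) Filter.atTop (nhds (p i)) :=
            ((continuous_apply i).tendsto p).comp (hlim.comp hψmono.tendsto_atTop)
          have h2 : Filter.Tendsto (fun k => L i.1 (xs (ψk k))) Filter.atTop
              (nhds (L i.1 x)) := ((hLcont i.1).tendsto x).comp hψtend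
          exact le_of_tendsto_of_tendsto' h1 h2 fun k => hxsle (ψk k) i
        exact hseq.isClosed
      have hpU : (fun _ : {φ // φ ∈ G} => r) ∉ U := by
        rintro ⟨x, hx, hall⟩
        obtain ⟨φ, hφG, hφlt⟩ := hcon x hx
        exact absurd (hall ⟨φ, hφG⟩) (not_le.2 hφlt)
      obtain ⟨flin, cc, hflt, hcf⟩ := geometric_hahn_banach_closed_point hUconv hUclosed hpU
      set sing : {φ // φ ∈ G} → ({φ // φ ∈ G} → ℝ) := fun i => Pi.single i 1 with hsingdef
      set lam : {φ // φ ∈ G} → ℝ := fun i => flin (sing i) with hlamdef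
      have hflin : ∀ u : {φ // φ ∈ G} → ℝ, flin u = ∑ i, u i * lam i := by
        intro u
        have h1 : ∑ i, u i • sing i = u := by
          rw [show ∑ i, u i • sing i = ∑ i, Pi.single i (u i) from
            Finset.sum_congr rfl fun i _ => by
              rw [hsingdef, ← Pi.single_smul, smul_eq_mul, mul_one]]
          exact Finset.univ_sum_single u
        conv_lhs => rw [← h1]
        rw [map_sum]
        exact Finset.sum_congr rfl fun i _ => by rw [_root_.map_smul, smul_eq_mul]
      have hu0 : (fun i : {φ // φ ∈ G} => L i.1 x0) ∈ U := ⟨x0, hx0, fun i => le_refl _⟩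
      have hu0lt : flin (fun i => L i.1 x0) < cc := hflt _ hu0
      have hlam0 : ∀ i, 0 ≤ lam i := by
        intro i
        by_contra hneg
        push_neg at hneg
        set t : ℝ := (cc - flin (fun i => L i.1 x0) + 1) / (-lam i) with htdef
        have ht : 0 ≤ t := div_nonneg (by linarith) (by linarith)
        have hmem : (fun i' : {φ // φ ∈ G} => L i'.1 x0) - t • sing i ∈ U := by
          refine ⟨x0, hx0, fun i' => ?_⟩
          have hsing : 0 ≤ sing i i' := by
            rcases eq_or_ne i' i with h | h
            · simp [hsingdef, h]
            · simp [hsingdef, Pi.single_eq_of_ne h]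
          have h4 : 0 ≤ t * sing i i' := mul_nonneg ht hsing
          have h5 : ((fun i' : {φ // φ ∈ G} => L i'.1 x0) - t • sing i) i'
              = L i'.1 x0 - t * sing i i' := rfl
          rw [h5]
          linarith
        have hval : flin ((fun i' : {φ // φ ∈ G} => L i'.1 x0) - t • sing i)
            = flin (fun i' => L i'.1 x0) - t * lam i := by
          rw [map_sub, _root_.map_smul, smul_eq_mul]
        have h6 := hflt _ hmem
        rw [hval] at h6
        have hne0 : lam i ≠ 0 := ne_of_lt hneg
        have h7 : t * lam i = -(cc - flin (fun i => L i.1 x0) + 1) := by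
          rw [htdef, div_mul_eq_mul_div, div_eq_iff (neg_ne_zero.2 hne0)]
          ring
        linarith
      have hSig0 : 0 ≤ ∑ i, lam i := Finset.sum_nonneg fun i _ => hlam0 i
      have hfp : flin (fun _ => r) = r * ∑ i, lam i := by
        rw [hflin, Finset.mul_sum]
      have hSigpos : 0 < ∑ i, lam i := by
        rcases hSig0.lt_or_eq with h | h
        · exact h
        · exfalso
          have hall0 : ∀ i ∈ Finset.univ, lam i = 0 :=
            (Finset.sum_eq_zero_iff_of_nonneg fun i _ => hlam0 i).1 h.symm
          have h1 : flin (fun i => L i.1 x0) = 0 := by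
            rw [hflin]
            exact Finset.sum_eq_zero fun i _ => by
              rw [hall0 i (Finset.mem_univ i), mul_zero]
          have h2 : flin (fun _ : {φ // φ ∈ G} => r) = 0 := by
            rw [hfp, ← h, mul_zero]
          have h3 := hcf
          rw [h2] at h3
          linarith
      have hccr : cc < r * ∑ i, lam i := by
        rw [← hfp]
        exact hcf
      -- the averaged multiplier
      set μ : {φ // φ ∈ G} → ℝ := fun i => lam i / ∑ i', lam i' with hμdef
      have hμ0 : ∀ i, 0 ≤ μ i := fun i => div_nonneg (hlam0 i) hSig0
      have hμsum : ∑ i, μ i = 1 := by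
        rw [hμdef, ← Finset.sum_div]
        exact div_self (ne_of_gt hSigpos)
      set φ' : J → ℝ := fun j => ∑ i, μ i * i.1 j with hφ'def
      have hmat : Ao + ∑ j, φ' j • A j = ∑ i, μ i • (Ao + ∑ j, i.1 j • A j) := by
        have e1 : ∀ i : {φ // φ ∈ G}, μ i • (Ao + ∑ j, i.1 j • A j)
            = μ i • Ao + ∑ j, (μ i * i.1 j) • A j := by
          intro i
          rw [smul_add, Finset.smul_sum]
          congr 1
          exact Finset.sum_congr rfl fun j _ => by rw [smul_smul]
        rw [show (∑ i, μ i • (Ao + ∑ j, i.1 j • A j))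
            = ∑ i, (μ i • Ao + ∑ j, (μ i * i.1 j) • A j) from
          Finset.sum_congr rfl fun i _ => e1 i]
        rw [Finset.sum_add_distrib, ← Finset.sum_smul, hμsum, one_smul, Finset.sum_comm]
        congr 1
        exact Finset.sum_congr rfl fun j _ => by rw [hφ'def, Finset.sum_smul]
      have hφ'Ψ : φ' ∈ Ψ := by
        rw [hΨ]
        refine ⟨fun j => Finset.sum_nonneg fun i _ => mul_nonneg (hμ0 i) ((hmemΨ i).1 j), ?_⟩
        rw [hmat]
        exact sionPsdSum μ hμ0 fun i => (hmemΨ i).2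
      have haff : ∀ x : Fin n → ℂ, L φ' x = ∑ i, μ i * L i.1 x := by
        intro x
        rw [hL]
        have e2 : ∀ i : {φ // φ ∈ G}, μ i * L i.1 x
            = μ i * fo x + ∑ j, (μ i * i.1 j) * f j x := by
          intro i
          rw [hL, mul_add, Finset.mul_sum]
          congr 1
          exact Finset.sum_congr rfl fun j _ => by ring
        rw [show (∑ i, μ i * L i.1 x) = ∑ i, (μ i * fo x + ∑ j, (μ i * i.1 j) * f j x) from
          Finset.sum_congr rfl fun i _ => e2 i]
        rw [Finset.sum_add_distrib, ← Finset.sum_mul, hμsum, one_mul, Finset.sum_comm]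
        congr 1
        exact Finset.sum_congr rfl fun j _ => by rw [hφ'def, Finset.sum_mul]
      have hub : ∀ x ∈ Fκ, L φ' x < cc / ∑ i, lam i := by
        intro x hx
        have hvU : (fun i : {φ // φ ∈ G} => L i.1 x) ∈ U := ⟨x, hx, fun i => le_refl _⟩
        have h8 := hflt _ hvU
        rw [hflin] at h8
        have h9 : L φ' x = (∑ i, L i.1 x * lam i) / ∑ i, lam i := by
          rw [eq_div_iff (ne_of_gt hSigpos), haff, Finset.sum_mul]
          refine Finset.sum_congr rfl fun i _ => ?_
          rw [hμdef]
          rw [mul_right_comm, div_mul_cancel₀ _ (ne_of_gt hSigpos), mul_comm]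
        rw [h9, div_lt_div_iff_of_pos_right hSigpos]
        exact h8
      have hDφ' : D φ' ≤ cc / ∑ i, lam i := by
        rw [hD]
        refine csSup_le (himgne φ') ?_
        rintro y ⟨x, hx, rfl⟩
        exact (hub x hx).le
      have h10 : D φs ≤ D φ' := hφsmin φ' hφ'Ψ
      have h11 : cc / ∑ i, lam i < r := (div_lt_iff₀ hSigpos).2 hccr
      linarith
    -- ### finite intersection property
    have hTclosed : ∀ φ : Ψ, IsClosed {x : Fin n → ℂ | r ≤ L φ.1 x} := fun φ =>
      isClosed_le continuous_const (hLcont φ.1)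
    have hfip : ∀ G : Finset Ψ,
        (Fκ ∩ ⋂ i ∈ G, {x : Fin n → ℂ | r ≤ L i.1 x}).Nonempty := by
      intro G
      have hsub : (↑(G.image Subtype.val) : Set (J → ℝ)) ⊆ Ψ := by
        intro φ hφ
        rw [Finset.coe_image] at hφ
        obtain ⟨i, -, rfl⟩ := hφ
        exact i.2
      obtain ⟨x, hxF, hxall⟩ := hfin (G.image Subtype.val) hsub
      refine ⟨x, hxF, ?_⟩
      exact Set.mem_iInter₂.2 fun i hi => hxall i.1 (Finset.mem_image_of_mem _ hi)
    obtain ⟨x, hxF, hxI⟩ := hFκcpt.inter_iInter_nonempty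
      (fun φ : Ψ => {x : Fin n → ℂ | r ≤ L φ.1 x}) hTclosed hfip
    exact ⟨x, hxF, fun φ hφ => Set.mem_iInter.1 hxI ⟨φ, hφ⟩⟩
  -- ## Conclusion of part 1
  have hSxt_ge : ∀ r : ℝ, r < D φs → (r : EReal) ≤ S xt := by
    intro r hr
    obtain ⟨x, hx, hall⟩ := hcore r hr
    have h1 : (r : EReal) ≤ S x := by
      rw [hS]
      exact le_iInf₂ fun φ hφ => by exact_mod_cast hall φ hφ
    exact h1.trans (hxtmax x hx)
  have hDS : (D φs : EReal) ≤ S xt := by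
    by_contra h
    push_neg at h
    obtain ⟨r, h1, h2⟩ := EReal.exists_between_coe_real h
    exact absurd (hSxt_ge r (by exact_mod_cast h2)) (not_le.2 h1)
  have hSL : S xt ≤ (L φs xt : EReal) := by
    rw [hS]
    exact iInf₂_le φs hφsΨ
  have main1 : L φs xt = D φs :=
    le_antisymm (hleD φs xt hxt) (by exact_mod_cast hDS.trans hSL)
  have main2 : ∀ x ∈ Fκ, L φs x ≤ L φs xt := by
    intro x hx
    rw [main1]
    exact hleD φs x hx
  refine ⟨main1, main2, ?_⟩
  -- ## Part 3
  intro xs hxs hmax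
  have heq : L φs xs = L φs xt := le_antisymm (main2 xs hxs) (hmax xt hxt)
  have hhalf : (1/2 : ℝ) + 1/2 = 1 := by norm_num
  have hm : ((1/2 : ℝ)) • xs + ((1/2 : ℝ)) • xt ∈ Fκ :=
    hFκconv xs hxs xt hxt _ _ (by norm_num) (by norm_num) hhalf
  have hcombo : L φs ((1/2 : ℝ) • xs + (1/2 : ℝ) • xt) =
      (1/2) * L φs xs + (1/2) * L φs xt +
        (1/2) * (1/2) * (star (xs - xt) ⬝ᵥ (Ao + ∑ j, φs j • A j) *ᵥ (xs - xt)).re := by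
    rw [hLq φs ((1/2 : ℝ) • xs + (1/2 : ℝ) • xt), hLq φs xs, hLq φs xt]
    exact sionQuadF_combo (hMherm φs) _ _ xs xt _ _ hhalf
  have hQ0 : (star (xs - xt) ⬝ᵥ (Ao + ∑ j, φs j • A j) *ᵥ (xs - xt)).re = 0 := by
    have h := hmax _ hm
    rw [hcombo] at h
    have hQge := sionPsdRe hφspsd (xs - xt)
    linarith
  have hker : (Ao + ∑ j, φs j • A j) *ᵥ (xs - xt) = 0 := sionPsdKernel hφspsd _ hQ0
  refine ⟨xt - xs, ?_, by abel⟩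
  show (Ao + ∑ j, φs j • A j) *ᵥ (xt - xs) = 0
  rw [show xt - xs = -(xs - xt) from (neg_sub xs xt).symm, Matrix.mulVec_neg, hker, neg_zero]
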